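/- arXiv:2303.09365 — 3 statements merged into one kernel-verified Lean document; each statement's English description precedes it below -/
import Mathlib

section
/- Let Ĥ be the graph whose vertices are the pairs (i, j) with i ∈ {1,2,3}, j ∈ {1,2,3,4}, excluding the three pairs (1,1), (2,2), (3,3), where (i₁, j₁) is adjacent to (i₂, j₂) if and only if i₁ ≠ i₂ and j₁ ≠ j₂. Then the chromatic number of Ĥ equals 3 and Kc(Ĥ, 4) ≥ 2. -/
open SimpleGraph

/-- The spanning subgraph of `G` consisting of the edges both of whose endpoints
receive color `i` or color `j` under `φ`. -/
def kempeSubgraph {V : Type*} (G : SimpleGraph V) {k : ℕ} (φ : V → Fin k) (i j : Fin k) :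
    SimpleGraph V where
  Adj u v := G.Adj u v ∧ (φ u = i ∨ φ u = j) ∧ (φ v = i ∨ φ v = j)
  symm := ⟨fun u v ⟨h, hu, hv⟩ => ⟨h.symm, hv, hu⟩⟩
  loopless := ⟨fun v h => G.loopless.irrefl v h.1⟩

/-- `ψ` is obtained from `φ` by a single `i,j`-Kempe swap:  the colors `i` and `j` are
interchanged on the connected component (of the subgraph induced by colors `i,j`)
containing `w`, and nothing else changes. -/
def IsKempeSwap {V : Type*} (G : SimpleGraph V) {k : ℕ}
    (φ ψ : G.Coloring (Fin k)) : Prop :=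
  ∃ (i j : Fin k) (w : V), ∀ v : V,
    ((kempeSubgraph G (fun x => φ x) i j).Reachable w v → ψ v = Equiv.swap i j (φ v)) ∧
    (¬ (kempeSubgraph G (fun x => φ x) i j).Reachable w v → ψ v = φ v)

/-- Kempe `k`-equivalence of proper `k`-colorings:  one can be transformed into the
other by a sequence of Kempe swaps. -/
def KempeEquiv {V : Type*} (G : SimpleGraph V) (k : ℕ)
    (φ ψ : G.Coloring (Fin k)) : Prop :=
  Relation.EqvGen (IsKempeSwap G) φ ψ

/-- `Kc G k` is the number of Kempe equivalence classes of proper `k`-colorings of `G`. -/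
noncomputable def Kc {V : Type*} (G : SimpleGraph V) (k : ℕ) : ℕ :=
  Nat.card (Quot (KempeEquiv G k))

/-- `G` can be obtained from a bipartite graph by adding `ℓ` edges. -/
def BipartitePlus {V : Type*} (G : SimpleGraph V) (ℓ : ℕ) : Prop :=
  ∃ E : Finset (Sym2 V), E.card = ℓ ∧ ↑E ⊆ G.edgeSet ∧
    (G.deleteEdges ↑E).Colorable 2

/-- `K₃ × K₄`: the categorical (tensor) product of complete graphs, on
`Fin 3 × Fin 4`, where `(i₁,j₁)` is adjacent to `(i₂,j₂)` iff `i₁ ≠ i₂` and `j₁ ≠ j₂`. -/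
def Htensor : SimpleGraph (Fin 3 × Fin 4) where
  Adj p q := p.1 ≠ q.1 ∧ p.2 ≠ q.2
  symm := ⟨fun p q h => ⟨h.1.symm, h.2.symm⟩⟩
  loopless := ⟨fun p h => h.1 rfl⟩

/-- The vertices of `Ĥ`: pairs `(i,j)` with `i ∈ Fin 3`, `j ∈ Fin 4`, excluding the
three "diagonal" pairs (which correspond to `(1,1), (2,2), (3,3)` in the 1-indexed
description). -/
abbrev HhatVert : Type := {p : Fin 3 × Fin 4 // (p.1 : ℕ) ≠ (p.2 : ℕ)}

/-- The graph `Ĥ`, i.e. `K₃ × K₄` with the three diagonal vertices deleted. -/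
def Hhat : SimpleGraph HhatVert where
  Adj p q := p.1.1 ≠ q.1.1 ∧ p.1.2 ≠ q.1.2
  symm := ⟨fun p q h => ⟨h.1.symm, h.2.symm⟩⟩
  loopless := ⟨fun p h => h.1 rfl⟩

/- ### auxiliary development -/

instance : DecidableRel Hhat.Adj := fun _ _ => inferInstanceAs (Decidable (_ ∧ _))

/-- The induced 2-columns subgraph. -/
def G2 (j₁ j₂ : Fin 4) : SimpleGraph HhatVert where
  Adj u v := Hhat.Adj u v ∧ (u.1.2 = j₁ ∨ u.1.2 = j₂) ∧ (v.1.2 = j₁ ∨ v.1.2 = j₂)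
  symm := ⟨fun u v ⟨h, hu, hv⟩ => ⟨h.symm, hv, hu⟩⟩
  loopless := ⟨fun v h => Hhat.loopless.irrefl v h.1⟩

instance (j₁ j₂ : Fin 4) : DecidableRel (G2 j₁ j₂).Adj :=
  fun _ _ => inferInstanceAs (Decidable (_ ∧ _))

set_option maxRecDepth 10000 in
lemma conn : ∀ j₁ j₂ : Fin 4, j₁ ≠ j₂ → ∀ u v : HhatVert,
    (u.1.2 = j₁ ∨ u.1.2 = j₂) → (v.1.2 = j₁ ∨ v.1.2 = j₂) → (G2 j₁ j₂).Reachable u v := by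
  decide

lemma crossEdge : ∀ j j' : Fin 4, j ≠ j' → ∃ u v : HhatVert,
    u.1.2 = j ∧ v.1.2 = j' ∧ Hhat.Adj u v := by
  decide

/-- A coloring is "column-constant". -/
def Const (ψ : HhatVert → Fin 4) : Prop := ∀ u v : HhatVert, u.1.2 = v.1.2 → ψ u = ψ v

def rep : Fin 4 → HhatVert
  | 0 => ⟨(1, 0), by decide⟩
  | 1 => ⟨(0, 1), by decide⟩
  | 2 => ⟨(0, 2), by decide⟩
  | 3 => ⟨(0, 3), by decide⟩

lemma col_rep : ∀ j : Fin 4, (rep j).1.2 = j := by decide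

lemma reach_end {K : SimpleGraph HhatVert} {w v : HhatVert} (h : K.Reachable w v) :
    v = w ∨ ∃ u, K.Adj u v := by
  obtain ⟨p⟩ := h
  induction p with
  | nil => exact Or.inl rfl
  | cons h q ih =>
    rcases ih with rfl | ⟨u, hu⟩
    · exact Or.inr ⟨_, h⟩
    · exact Or.inr ⟨u, hu⟩

lemma reach_start {K : SimpleGraph HhatVert} {w v : HhatVert} (h : K.Reachable w v) :
    w = v ∨ ∃ u, K.Adj w u := by
  obtain ⟨p⟩ := h
  cases p with
  | nil => exact Or.inl rfl
  | cons h q => exact Or.inr ⟨_, h⟩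

lemma core (φ ψ : Hhat.Coloring (Fin 4)) (i j : Fin 4) (w : HhatVert)
    (h : ∀ v : HhatVert,
      ((kempeSubgraph Hhat (fun x => φ x) i j).Reachable w v → ψ v = Equiv.swap i j (φ v)) ∧
      (¬ (kempeSubgraph Hhat (fun x => φ x) i j).Reachable w v → ψ v = φ v))
    (hc : Const (fun x => φ x)) : Const (fun x => ψ x) := by
  set K := kempeSubgraph Hhat (fun x => φ x) i j with hK
  by_cases hij : i = j
  · have he : ∀ v, ψ v = φ v := by
      intro v
      by_cases hr : K.Reachable w v
      · rw [(h v).1 hr, hij, Equiv.swap_self, Equiv.refl_apply]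
      · exact (h v).2 hr
    intro u v huv
    show ψ u = ψ v
    rw [he u, he v]; exact hc u v huv
  · -- the column-color function
    set c : Fin 4 → Fin 4 := fun j => φ (rep j) with hcdef
    have hφcol : ∀ v : HhatVert, φ v = c v.1.2 := by
      intro v
      exact hc v (rep v.1.2) (col_rep v.1.2).symm
    have hcinj : Function.Injective c := by
      intro a b hab
      by_contra hne
      obtain ⟨u, v, hu, hv, huv⟩ := crossEdge a b hne
      apply φ.valid huv
      rw [hφcol u, hφcol v, hu, hv, hab]
    have hcsurj : Function.Surjective c := Finite.injective_iff_surjective.mp hcinj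
    obtain ⟨j₁, hj₁⟩ := hcsurj i
    obtain ⟨j₂, hj₂⟩ := hcsurj j
    have hj12 : j₁ ≠ j₂ := fun e => hij (hj₁ ▸ hj₂ ▸ e ▸ rfl)
    have memIff : ∀ v : HhatVert, (φ v = i ∨ φ v = j) ↔ (v.1.2 = j₁ ∨ v.1.2 = j₂) := by
      intro v
      rw [hφcol v, ← hj₁, ← hj₂]
      exact ⟨fun h => h.imp (fun e => hcinj e) (fun e => hcinj e),
             fun h => h.imp (fun e => by rw [e]) (fun e => by rw [e])⟩
    have Keq : ∀ u v : HhatVert, K.Adj u v ↔ (G2 j₁ j₂).Adj u v := by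
      intro u v
      show (Hhat.Adj u v ∧ _ ∧ _) ↔ (Hhat.Adj u v ∧ _ ∧ _)
      rw [memIff u, memIff v]
    have Kreach : ∀ u v : HhatVert, K.Reachable u v ↔ (G2 j₁ j₂).Reachable u v := by
      have : K = G2 j₁ j₂ := SimpleGraph.ext (by ext u v; exact Keq u v)
      intro u v; rw [this]
    by_cases hw : φ w = i ∨ φ w = j
    · -- w in the two columns; reached set = the two columns
      have Rchar : ∀ v : HhatVert, K.Reachable w v ↔ (v.1.2 = j₁ ∨ v.1.2 = j₂) := by
        intro v
        constructor
        · intro hr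
          rcases reach_end hr with rfl | ⟨u, hu⟩
          · exact (memIff v).mp hw
          · exact (memIff v).mp hu.2.2
        · intro hv
          exact (Kreach w v).mpr (conn j₁ j₂ hj12 w v ((memIff w).mp hw) hv)
      intro u v huv
      show ψ u = ψ v
      by_cases hu : u.1.2 = j₁ ∨ u.1.2 = j₂
      · have hv : v.1.2 = j₁ ∨ v.1.2 = j₂ := huv ▸ hu
        rw [(h u).1 ((Rchar u).mpr hu), (h v).1 ((Rchar v).mpr hv), hφcol u, hφcol v, huv]
      · have hv : ¬ (v.1.2 = j₁ ∨ v.1.2 = j₂) := huv ▸ hu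
        rw [(h u).2 (fun hr => hu ((Rchar u).mp hr)),
            (h v).2 (fun hr => hv ((Rchar v).mp hr)), hφcol u, hφcol v, huv]
    · -- w not colored i or j: nothing changes
      have he : ∀ v, ψ v = φ v := by
        intro v
        by_cases hr : K.Reachable w v
        · rcases reach_start hr with heq | ⟨u, hu⟩
          · rw [(h v).1 hr]
            have h1 : φ v ≠ i := heq ▸ (not_or.mp hw).1
            have h2 : φ v ≠ j := heq ▸ (not_or.mp hw).2
            exact Equiv.swap_apply_of_ne_of_ne h1 h2
          · exact absurd hu.2.1 hw
        · exact (h v).2 hr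
      intro u v huv
      show ψ u = ψ v
      rw [he u, he v]; exact hc u v huv

lemma swap_iff {φ ψ : Hhat.Coloring (Fin 4)} (h : IsKempeSwap Hhat φ ψ) :
    Const (fun x => φ x) ↔ Const (fun x => ψ x) := by
  obtain ⟨i, j, w, h⟩ := h
  constructor
  · exact core φ ψ i j w h
  · -- reversed data
    intro hcψ
    have memIff : ∀ v : HhatVert, (ψ v = i ∨ ψ v = j) ↔ (φ v = i ∨ φ v = j) := by
      intro v
      by_cases hr : (kempeSubgraph Hhat (fun x => φ x) i j).Reachable w v
      · rw [(h v).1 hr]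
        constructor
        · rintro (e | e)
          · right; exact (Equiv.swap_apply_eq_iff.mp e).trans (Equiv.swap_apply_left i j)
          · left; exact (Equiv.swap_apply_eq_iff.mp e).trans (Equiv.swap_apply_right i j)
        · rintro (e | e)
          · right; rw [e, Equiv.swap_apply_left]
          · left; rw [e, Equiv.swap_apply_right]
      · rw [(h v).2 hr]
    have Keq : kempeSubgraph Hhat (fun x => ψ x) i j = kempeSubgraph Hhat (fun x => φ x) i j := by
      refine SimpleGraph.ext ?_
      ext u v
      show (Hhat.Adj u v ∧ _ ∧ _) ↔ (Hhat.Adj u v ∧ _ ∧ _)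
      rw [memIff u, memIff v]
    have h' : ∀ v : HhatVert,
        ((kempeSubgraph Hhat (fun x => ψ x) i j).Reachable w v → φ v = Equiv.swap i j (ψ v)) ∧
        (¬ (kempeSubgraph Hhat (fun x => ψ x) i j).Reachable w v → φ v = ψ v) := by
      intro v
      rw [Keq]
      constructor
      · intro hr
        rw [(h v).1 hr, Equiv.swap_apply_self]
      · intro hr
        exact ((h v).2 hr).symm
    exact core ψ φ i j w h' hcψ

lemma eqvgen_const {φ ψ : Hhat.Coloring (Fin 4)}
    (h : Relation.EqvGen (IsKempeSwap Hhat) φ ψ) :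
    Const (fun x => φ x) ↔ Const (fun x => ψ x) := by
  induction h with
  | rel _ _ hr => exact swap_iff hr
  | refl _ => rfl
  | symm _ _ _ ih => exact ih.symm
  | trans _ _ _ _ _ ih1 ih2 => exact ih1.trans ih2

lemma kempe_const {φ ψ : Hhat.Coloring (Fin 4)}
    (h : Relation.EqvGen (KempeEquiv Hhat 4) φ ψ) :
    Const (fun x => φ x) ↔ Const (fun x => ψ x) := by
  induction h with
  | rel _ _ hr => exact eqvgen_const hr
  | refl _ => rfl
  | symm _ _ _ ih => exact ih.symm
  | trans _ _ _ _ _ ih1 ih2 => exact ih1.trans ih2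

/-- the row coloring, with 4 colors -/
def φ₀ : Hhat.Coloring (Fin 4) :=
  SimpleGraph.Coloring.mk (fun v => Fin.castLE (by omega) v.1.1)
    (fun {u v} h e => h.1 (Fin.castLE_injective _ e))

/-- the column coloring -/
def ψ₀ : Hhat.Coloring (Fin 4) :=
  SimpleGraph.Coloring.mk (fun v => v.1.2) (fun {u v} h e => h.2 e)

instance : Finite (Hhat.Coloring (Fin 4)) :=
  Finite.of_injective (fun C => (C : HhatVert → Fin 4)) DFunLike.coe_injective

/-- `Ĥ` has chromatic number 3 and at least two Kempe equivalence classes of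
4-colorings. -/
theorem stmt4 : Hhat.chromaticNumber = 3 ∧ 2 ≤ Kc Hhat 4 := by
  constructor
  · -- chromatic number
    apply le_antisymm
    · have : Hhat.Colorable 3 :=
        ⟨SimpleGraph.Coloring.mk (fun v => v.1.1) (fun {u v} h e => h.1 e)⟩
      exact_mod_cast this.chromaticNumber_le
    · by_contra hlt
      push_neg at hlt
      have h2 : Hhat.chromaticNumber ≤ (2 : ℕ) :=
        Order.le_of_lt_add_one (lt_of_lt_of_le hlt (by norm_num))
      have hcol : Hhat.Colorable 2 :=
        SimpleGraph.chromaticNumber_le_iff_colorable.mp h2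
      obtain ⟨C⟩ := hcol
      let a : HhatVert := ⟨(0, 1), by decide⟩
      let b : HhatVert := ⟨(1, 2), by decide⟩
      let c : HhatVert := ⟨(2, 3), by decide⟩
      have hab := C.valid (show Hhat.Adj a b by decide)
      have hac := C.valid (show Hhat.Adj a c by decide)
      have hbc := C.valid (show Hhat.Adj b c by decide)
      have v1 : (C a).val < 2 := (C a).isLt
      have v2 : (C b).val < 2 := (C b).isLt
      have v3 : (C c).val < 2 := (C c).isLt
      have e1 : (C a).val ≠ (C b).val := fun e => hab (Fin.ext e)
      have e2 : (C a).val ≠ (C c).val := fun e => hac (Fin.ext e)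
      have e3 : (C b).val ≠ (C c).val := fun e => hbc (Fin.ext e)
      omega
  · have hnt : Nontrivial (Quot (KempeEquiv Hhat 4)) := by
      refine ⟨Quot.mk _ φ₀, Quot.mk _ ψ₀, fun e => ?_⟩
      have h := Quot.eq.mp e
      have hiff := kempe_const h
      have hψ : Const (fun x => ψ₀ x) := fun u v h => h
      have hφ : ¬ Const (fun x => φ₀ x) := by
        intro hC
        have h01 := hC ⟨(0, 3), by decide⟩ ⟨(1, 3), by decide⟩ rfl
        exact absurd (congrArg Fin.val h01) (by decide)
      exact hφ (hiff.mpr hψ)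
    exact Finite.one_lt_card
end

section
/- Let Ĥ be the graph whose vertices are the pairs (i, j) with i ∈ {1,2,3}, j ∈ {1,2,3,4}, excluding (1,1), (2,2), (3,3), where (i₁, j₁) is adjacent to (i₂, j₂) if and only if i₁ ≠ i₂ and j₁ ≠ j₂, and let β̂ be the proper 4-coloring of Ĥ assigning to each vertex (i, j) the color j. Then every proper 4-coloring of Ĥ that is Kempe-4-equivalent to β̂ has the same color classes as β̂ up to a permutation of the colors. -/
open SimpleGraph

/-- The proper 4-coloring `β̂` of `Ĥ` given by the second coordinate. -/
def betaHat : Hhat.Coloring (Fin 4) :=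
  SimpleGraph.Coloring.mk (fun p => p.1.2) (fun h => h.2)

-- auxiliary
instance hhatAdjDecidable : DecidableRel Hhat.Adj := fun p q =>
  inferInstanceAs (Decidable (p.1.1 ≠ q.1.1 ∧ p.1.2 ≠ q.1.2))

set_option maxHeartbeats 1000000 in
set_option synthInstance.maxHeartbeats 400000 in
set_option synthInstance.maxSize 1024 in
lemma hhat_key : ∀ i j : Fin 4, i ≠ j → ∀ w v : HhatVert,
    (w.1.2 = i ∨ w.1.2 = j) → (v.1.2 = i ∨ v.1.2 = j) →
    (w = v ∨ Hhat.Adj w v ∨ (∃ u, (u.1.2 = i ∨ u.1.2 = j) ∧ Hhat.Adj w u ∧ Hhat.Adj u v) ∨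
      (∃ u1 u2, (u1.1.2 = i ∨ u1.1.2 = j) ∧ (u2.1.2 = i ∨ u2.1.2 = j) ∧
        Hhat.Adj w u1 ∧ Hhat.Adj u1 u2 ∧ Hhat.Adj u2 v) ∨
      (∃ u1 u2 u3, (u1.1.2 = i ∨ u1.1.2 = j) ∧ (u2.1.2 = i ∨ u2.1.2 = j) ∧ (u3.1.2 = i ∨ u3.1.2 = j) ∧
        Hhat.Adj w u1 ∧ Hhat.Adj u1 u2 ∧ Hhat.Adj u2 u3 ∧ Hhat.Adj u3 v)) := by decide

lemma swap_mem {k : ℕ} {i j x : Fin k} :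
    (Equiv.swap i j x = i ∨ Equiv.swap i j x = j) ↔ (x = i ∨ x = j) := by
  constructor
  · rintro (h | h)
    · right
      have := congrArg (Equiv.swap i j) h
      rwa [Equiv.swap_apply_self, Equiv.swap_apply_left] at this
    · left
      have := congrArg (Equiv.swap i j) h
      rwa [Equiv.swap_apply_self, Equiv.swap_apply_right] at this
  · rintro (h | h)
    · rw [h]; exact Or.inr (Equiv.swap_apply_left i j)
    · rw [h]; exact Or.inl (Equiv.swap_apply_right i j)

lemma kempeSubgraph_congr {V : Type*} (G : SimpleGraph V) {k : ℕ} (φ ψ : V → Fin k)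
    (i j : Fin k) (h : ∀ v, (φ v = i ∨ φ v = j) ↔ (ψ v = i ∨ ψ v = j)) :
    kempeSubgraph G φ i j = kempeSubgraph G ψ i j := by
  ext u v
  show G.Adj u v ∧ _ ∧ _ ↔ G.Adj u v ∧ _ ∧ _
  rw [h u, h v]

lemma isKempeSwap_symm {V : Type*} {G : SimpleGraph V} {k : ℕ}
    {φ ψ : G.Coloring (Fin k)} (hk : IsKempeSwap G φ ψ) : IsKempeSwap G ψ φ := by
  obtain ⟨i, j, w, h⟩ := hk
  have hgr : kempeSubgraph G (fun x => ψ x) i j = kempeSubgraph G (fun x => φ x) i j := by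
    apply kempeSubgraph_congr
    intro v
    by_cases hr : (kempeSubgraph G (fun x => φ x) i j).Reachable w v
    · rw [(h v).1 hr]; exact swap_mem
    · rw [(h v).2 hr]
  refine ⟨i, j, w, fun v => ⟨?_, ?_⟩⟩ <;> rw [hgr] <;> intro hr
  · rw [(h v).1 hr, Equiv.swap_apply_self]
  · exact ((h v).2 hr).symm

lemma beta_reach {φ : Hhat.Coloring (Fin 4)} {σ : Equiv.Perm (Fin 4)}
    (hφ : ∀ v, φ v = σ (betaHat v)) {i j : Fin 4} (hij : i ≠ j) {w v : HhatVert}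
    (hw : φ w = i ∨ φ w = j) (hv : φ v = i ∨ φ v = j) :
    (kempeSubgraph Hhat (fun x => φ x) i j).Reachable w v := by
  set i' := σ.symm i with hi'
  set j' := σ.symm j with hj'
  have hij' : i' ≠ j' := fun h => hij (by simpa [hi', hj'] using congrArg σ h)
  have hcol : ∀ u : HhatVert, (φ u = i ∨ φ u = j) ↔ (u.1.2 = i' ∨ u.1.2 = j') := by
    intro u
    have hb : betaHat u = u.1.2 := rfl
    rw [hφ u, hb, hi', hj']
    constructor
    · rintro (h | h)
      · exact Or.inl ((Equiv.apply_eq_iff_eq_symm_apply σ).mp h)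
      · exact Or.inr ((Equiv.apply_eq_iff_eq_symm_apply σ).mp h)
    · rintro (h | h)
      · exact Or.inl (by rw [h, Equiv.apply_symm_apply])
      · exact Or.inr (by rw [h, Equiv.apply_symm_apply])
  have kadj : ∀ u u' : HhatVert, (u.1.2 = i' ∨ u.1.2 = j') → (u'.1.2 = i' ∨ u'.1.2 = j') →
      Hhat.Adj u u' → (kempeSubgraph Hhat (fun x => φ x) i j).Adj u u' := by
    intro u u' hu hu' hadj
    exact ⟨hadj, (hcol u).mpr hu, (hcol u').mpr hu'⟩
  have hw' := (hcol w).mp hw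
  have hv' := (hcol v).mp hv
  rcases hhat_key i' j' hij' w v hw' hv' with h0 | h1 | ⟨u, hu, h1, h2⟩ |
      ⟨u1, u2, hu1, hu2, h1, h2, h3⟩ | ⟨u1, u2, u3, hu1, hu2, hu3, h1, h2, h3, h4⟩
  · exact h0 ▸ Reachable.refl w
  · exact (kadj w v hw' hv' h1).reachable
  · exact (kadj w u hw' hu h1).reachable.trans (kadj u v hu hv' h2).reachable
  · exact ((kadj w u1 hw' hu1 h1).reachable.trans
      (kadj u1 u2 hu1 hu2 h2).reachable).trans (kadj u2 v hu2 hv' h3).reachable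
  · exact (((kadj w u1 hw' hu1 h1).reachable.trans
      (kadj u1 u2 hu1 hu2 h2).reachable).trans
      (kadj u2 u3 hu2 hu3 h3).reachable).trans (kadj u3 v hu3 hv' h4).reachable

lemma kempe_forward {φ ψ : Hhat.Coloring (Fin 4)} (hk : IsKempeSwap Hhat φ ψ)
    {σ : Equiv.Perm (Fin 4)} (hφ : ∀ v, φ v = σ (betaHat v)) :
    ∃ σ' : Equiv.Perm (Fin 4), ∀ v, ψ v = σ' (betaHat v) := by
  obtain ⟨i, j, w, h⟩ := hk
  by_cases hij : i = j
  · subst hij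
    refine ⟨σ, fun v => ?_⟩
    by_cases hr : (kempeSubgraph Hhat (fun x => φ x) i i).Reachable w v
    · rw [(h v).1 hr, Equiv.swap_self, Equiv.refl_apply]; exact hφ v
    · rw [(h v).2 hr]; exact hφ v
  by_cases hw : φ w = i ∨ φ w = j
  · refine ⟨σ.trans (Equiv.swap i j), fun v => ?_⟩
    have hgoal : (σ.trans (Equiv.swap i j)) (betaHat v) = Equiv.swap i j (φ v) := by
      rw [Equiv.trans_apply, ← hφ v]
    rw [hgoal]
    by_cases hv : φ v = i ∨ φ v = j
    · exact (h v).1 (beta_reach hφ hij hw hv)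
    · push_neg at hv
      by_cases hr : (kempeSubgraph Hhat (fun x => φ x) i j).Reachable w v
      · exact (h v).1 hr
      · rw [(h v).2 hr, Equiv.swap_apply_of_ne_of_ne hv.1 hv.2]
  · refine ⟨σ, fun v => ?_⟩
    by_cases hr : (kempeSubgraph Hhat (fun x => φ x) i j).Reachable w v
    · have hv : v = w := by
        obtain ⟨p⟩ := hr
        cases p with
        | nil => rfl
        | cons h' _ => exact absurd h'.2.1 hw
      subst hv
      push_neg at hw
      rw [(h v).1 hr, Equiv.swap_apply_of_ne_of_ne hw.1 hw.2]
      exact hφ v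
    · rw [(h v).2 hr]; exact hφ v


/-- Every 4-coloring of `Ĥ` that is Kempe 4-equivalent to `β̂` has the same color
classes as `β̂` up to a permutation of the colors. -/
theorem stmt8 (ψ : Hhat.Coloring (Fin 4)) (h : KempeEquiv Hhat 4 betaHat ψ) :
    ∃ σ : Equiv.Perm (Fin 4), ∀ v : HhatVert, ψ v = σ (betaHat v) := by
  have invar : ∀ φ₁ φ₂ : Hhat.Coloring (Fin 4), Relation.EqvGen (IsKempeSwap Hhat) φ₁ φ₂ →
      ((∃ σ : Equiv.Perm (Fin 4), ∀ v, φ₁ v = σ (betaHat v)) ↔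
       (∃ σ : Equiv.Perm (Fin 4), ∀ v, φ₂ v = σ (betaHat v))) := by
    intro φ₁ φ₂ hgen
    induction hgen with
    | rel a b hab =>
      exact ⟨fun ⟨σ, hσ⟩ => kempe_forward hab hσ,
             fun ⟨σ, hσ⟩ => kempe_forward (isKempeSwap_symm hab) hσ⟩
    | refl a => exact Iff.rfl
    | symm a b _ ih => exact ih.symm
    | trans a b c _ _ ih1 ih2 => exact ih1.trans ih2
  exact (invar betaHat ψ h).mp ⟨Equiv.refl _, fun v => rfl⟩
end

section
/- For each integer k ≥ 4, let G_k be the graph obtained from the complete bipartite graph K_{9, k−4} with parts S (of size 9) and T (of size k − 4) by placing on S a copy of the graph Ĥ (the graph on pairs (i, j), i ∈ {1,2,3}, j ∈ {1,2,3,4}, excluding (1,1), (2,2), (3,3), with (i₁, j₁) adjacent to (i₂, j₂) iff i₁ ≠ i₂ and j₁ ≠ j₂) and making T a clique (adding all C(k−4, 2) edges inside T). Then G_k is (k−1)-colorable and Kc(G_k, k) ≥ 2. -/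
open SimpleGraph

/-- The graph `G_k` obtained from the complete bipartite graph `K_{9,k-4}`, with
parts `S` (a copy of the 9 vertices of `Ĥ`) and `T` of size `k - 4`, by adding the
edges of `Ĥ` inside `S` and all edges inside `T`. -/
def Gk (k : ℕ) : SimpleGraph (HhatVert ⊕ Fin (k - 4)) where
  Adj u v :=
    match u, v with
    | Sum.inl a, Sum.inl b => Hhat.Adj a b
    | Sum.inl _, Sum.inr _ => True
    | Sum.inr _, Sum.inl _ => True
    | Sum.inr a, Sum.inr b => a ≠ b
  symm := by
    refine ⟨?_⟩
    rintro (a | a) (b | b) h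
    · exact Hhat.symm.symm _ _ h
    · trivial
    · trivial
    · exact Ne.symm h
  loopless := by
    refine ⟨?_⟩
    rintro (a | a) h
    · exact Hhat.loopless.irrefl a h
    · exact h rfl

/-! ### Auxiliary lemmas -/

section KempeLemmas

variable {V : Type*} {G : SimpleGraph V} {k : ℕ}

/-- Frozen coloring: every Kempe class is connected. -/
def Frozen (G : SimpleGraph V) (φ : V → Fin k) : Prop :=
  ∀ i j : Fin k, i ≠ j → ∀ u v : V, (φ u = i ∨ φ u = j) → (φ v = i ∨ φ v = j) →
    (kempeSubgraph G φ i j).Reachable u v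

lemma kempe_congr {φ ψ : V → Fin k} {i j : Fin k}
    (h : ∀ v, (φ v = i ∨ φ v = j) ↔ (ψ v = i ∨ ψ v = j)) :
    kempeSubgraph G φ i j = kempeSubgraph G ψ i j := by
  ext u v
  show G.Adj u v ∧ _ ∧ _ ↔ G.Adj u v ∧ _ ∧ _
  rw [h u, h v]

lemma kempe_comm (φ : V → Fin k) (i j : Fin k) :
    kempeSubgraph G φ i j = kempeSubgraph G φ j i := by
  ext u v
  show G.Adj u v ∧ _ ∧ _ ↔ G.Adj u v ∧ _ ∧ _
  tauto

lemma kempe_perm (φ : V → Fin k) (σ : Equiv.Perm (Fin k)) (i j : Fin k) :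
    kempeSubgraph G (fun v => σ (φ v)) i j = kempeSubgraph G φ (σ.symm i) (σ.symm j) := by
  ext u v
  show G.Adj u v ∧ _ ∧ _ ↔ G.Adj u v ∧ _ ∧ _
  constructor
  · rintro ⟨ha, hu, hv⟩
    refine ⟨ha, ?_, ?_⟩ <;>
      [rcases hu with h | h; skip] <;> [skip; skip; rcases hv with h | h] <;>
      simp [← h]
  · rintro ⟨ha, hu, hv⟩
    refine ⟨ha, ?_, ?_⟩ <;>
      [rcases hu with h | h; skip] <;> [skip; skip; rcases hv with h | h] <;>
      simp [h]

lemma frozen_perm {φ : V → Fin k} (hf : Frozen G φ) (σ : Equiv.Perm (Fin k)) :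
    Frozen G (fun v => σ (φ v)) := by
  intro i j hij u v hu hv
  rw [kempe_perm]
  have hij' : σ.symm i ≠ σ.symm j := fun h => hij (by simpa using congrArg σ h)
  refine hf _ _ hij' u v ?_ ?_
  · rcases hu with h | h <;> simp [← h]
  · rcases hv with h | h <;> simp [← h]

lemma frozen_swap {φ ψ : G.Coloring (Fin k)} (hf : Frozen G (fun x => φ x))
    (hs : IsKempeSwap G φ ψ) : ∃ σ : Equiv.Perm (Fin k), ∀ v, ψ v = σ (φ v) := by
  obtain ⟨i, j, w, h⟩ := hs
  by_cases hij : i = j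
  · refine ⟨Equiv.refl _, fun v => ?_⟩
    by_cases hr : (kempeSubgraph G (fun x => φ x) i j).Reachable w v
    · rw [(h v).1 hr, hij, Equiv.swap_self]
    · exact (h v).2 hr
  · by_cases hw : φ w = i ∨ φ w = j
    · refine ⟨Equiv.swap i j, fun v => ?_⟩
      by_cases hv : φ v = i ∨ φ v = j
      · exact (h v).1 (hf i j hij w v hw hv)
      · push_neg at hv
        by_cases hr : (kempeSubgraph G (fun x => φ x) i j).Reachable w v
        · exact (h v).1 hr
        · rw [(h v).2 hr, Equiv.swap_apply_of_ne_of_ne hv.1 hv.2]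
    · refine ⟨Equiv.refl _, fun v => ?_⟩
      push_neg at hw
      by_cases hvw : v = w
      · subst hvw
        rw [(h v).1 (Reachable.refl v), Equiv.swap_apply_of_ne_of_ne hw.1 hw.2]; rfl
      · refine (h v).2 fun hr => ?_
        obtain ⟨wk⟩ := hr
        cases wk with
        | nil => exact hvw rfl
        | cons ha _ =>
          rcases ha.2.1 with h1 | h1
          · exact hw.1 h1
          · exact hw.2 h1

lemma kempeSwap_symm {φ ψ : G.Coloring (Fin k)} (hs : IsKempeSwap G φ ψ) :
    IsKempeSwap G ψ φ := by
  obtain ⟨i, j, w, h⟩ := hs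
  have hmem : ∀ v, ((fun x => φ x) v = i ∨ (fun x => φ x) v = j) ↔
      ((fun x => ψ x) v = i ∨ (fun x => ψ x) v = j) := by
    intro v
    show φ v = i ∨ φ v = j ↔ ψ v = i ∨ ψ v = j
    by_cases hr : (kempeSubgraph G (fun x => φ x) i j).Reachable w v
    · rw [(h v).1 hr]
      constructor
      · rintro (h1 | h1) <;> simp [h1, Equiv.swap_apply_left, Equiv.swap_apply_right]
      · rintro (h1 | h1)
        · rcases eq_or_ne (φ v) i with h2 | h2
          · exact Or.inl h2
          rcases eq_or_ne (φ v) j with h3 | h3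
          · exact Or.inr h3
          rw [Equiv.swap_apply_of_ne_of_ne h2 h3] at h1
          exact Or.inl h1
        · rcases eq_or_ne (φ v) i with h2 | h2
          · exact Or.inl h2
          rcases eq_or_ne (φ v) j with h3 | h3
          · exact Or.inr h3
          rw [Equiv.swap_apply_of_ne_of_ne h2 h3] at h1
          exact Or.inr h1
    · rw [(h v).2 hr]
  have hgr : kempeSubgraph G (fun x => ψ x) i j = kempeSubgraph G (fun x => φ x) i j :=
    kempe_congr fun v => (hmem v).symm
  refine ⟨i, j, w, fun v => ⟨fun hr => ?_, fun hr => ?_⟩⟩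
  · rw [hgr] at hr
    rw [(h v).1 hr, Equiv.swap_apply_self]
  · rw [hgr] at hr
    exact ((h v).2 hr).symm

end KempeLemmas

/-! ### Connectivity inside `Ĥ` -/

def colOK (a b : Fin 4) (p : HhatVert) : Prop := p.1.2 = a ∨ p.1.2 = b

def hAdj (a b : Fin 4) (p q : HhatVert) : Prop :=
  (p.1.1 ≠ q.1.1 ∧ p.1.2 ≠ q.1.2) ∧ colOK a b p ∧ colOK a b q

instance (a b : Fin 4) : DecidablePred (colOK a b) := fun p => by unfold colOK; infer_instance
instance (a b : Fin 4) (p q : HhatVert) : Decidable (hAdj a b p q) := by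
  unfold hAdj; infer_instance

def Chain4 (a b : Fin 4) (p q : HhatVert) : Prop :=
  p = q ∨ hAdj a b p q ∨ (∃ m, hAdj a b p m ∧ hAdj a b m q) ∨
    (∃ m n, hAdj a b p m ∧ hAdj a b m n ∧ hAdj a b n q) ∨
    (∃ m n o, hAdj a b p m ∧ hAdj a b m n ∧ hAdj a b n o ∧ hAdj a b o q)

instance (a b : Fin 4) (p q : HhatVert) : Decidable (Chain4 a b p q) := by
  unfold Chain4; infer_instance

lemma chainKey : ∀ a b : Fin 4, a ≠ b → ∀ p q : HhatVert,
    colOK a b p → colOK a b q → Chain4 a b p q := by decide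

/-! ### The two colorings of `G_k` -/

def phi1 (k : ℕ) (hk : 4 ≤ k) : (HhatVert ⊕ Fin (k - 4)) → Fin k
  | Sum.inl p => ⟨p.1.2, by have := p.1.2.isLt; omega⟩
  | Sum.inr t => ⟨4 + t, by have := t.isLt; omega⟩

def phi2 (k : ℕ) (hk : 4 ≤ k) : (HhatVert ⊕ Fin (k - 4)) → Fin k
  | Sum.inl p => ⟨p.1.1, by have := p.1.1.isLt; omega⟩
  | Sum.inr t => ⟨4 + t, by have := t.isLt; omega⟩

def col1 (k : ℕ) (hk : 4 ≤ k) : (Gk k).Coloring (Fin k) :=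
  Coloring.mk (phi1 k hk) (by
    rintro (p | t) (q | s) h
    · simp only [phi1, Ne, Fin.mk.injEq]
      exact fun he => h.2 (Fin.ext he)
    · simp only [phi1, Ne, Fin.mk.injEq]
      have := p.1.2.isLt; omega
    · simp only [phi1, Ne, Fin.mk.injEq]
      have := q.1.2.isLt; omega
    · simp only [phi1, Ne, Fin.mk.injEq]
      exact fun he => h (Fin.ext (by omega)))

def col2 (k : ℕ) (hk : 4 ≤ k) : (Gk k).Coloring (Fin k) :=
  Coloring.mk (phi2 k hk) (by
    rintro (p | t) (q | s) h
    · simp only [phi2, Ne, Fin.mk.injEq]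
      exact fun he => h.1 (Fin.ext he)
    · simp only [phi2, Ne, Fin.mk.injEq]
      have := p.1.1.isLt; omega
    · simp only [phi2, Ne, Fin.mk.injEq]
      have := q.1.1.isLt; omega
    · simp only [phi2, Ne, Fin.mk.injEq]
      exact fun he => h (Fin.ext (by omega)))

/-! ### `phi1` is frozen -/

lemma hubReach (k : ℕ) (hk : 4 ≤ k) {i j : Fin k} (hij : i ≠ j) (hj : 4 ≤ j.val) :
    ∀ u, (phi1 k hk u = i ∨ phi1 k hk u = j) →
      (kempeSubgraph (Gk k) (phi1 k hk) i j).Reachable u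
        (Sum.inr ⟨j.val - 4, by have := j.isLt; omega⟩) := by
  have hcol : phi1 k hk (Sum.inr ⟨j.val - 4, by have := j.isLt; omega⟩) = j := by
    simp only [phi1]
    exact Fin.ext (by simp; omega)
  intro u hu
  by_cases he : u = Sum.inr ⟨j.val - 4, by have := j.isLt; omega⟩
  · rw [he]
  · refine SimpleGraph.Adj.reachable ?_
    refine ⟨?_, hu, Or.inr hcol⟩
    cases u with
    | inl p => trivial
    | inr t =>
      show t ≠ _
      exact fun h => he (by rw [h])

lemma phi1_frozen (k : ℕ) (hk : 4 ≤ k) : Frozen (Gk k) (phi1 k hk) := by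
  have key : ∀ i j : Fin k, i ≠ j → 4 ≤ j.val → ∀ u v,
      (phi1 k hk u = i ∨ phi1 k hk u = j) → (phi1 k hk v = i ∨ phi1 k hk v = j) →
      (kempeSubgraph (Gk k) (phi1 k hk) i j).Reachable u v := by
    intro i j hij hj u v hu hv
    exact (hubReach k hk hij hj u hu).trans (hubReach k hk hij hj v hv).symm
  intro i j hij u v hu hv
  by_cases hj : 4 ≤ j.val
  · exact key i j hij hj u v hu hv
  by_cases hi : 4 ≤ i.val
  · rw [kempe_comm]
    exact key j i hij.symm hi u v hu.symm hv.symm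
  -- both colors small
  push_neg at hi hj
  obtain ⟨p, rfl⟩ : ∃ p, u = Sum.inl p := by
    cases u with
    | inl p => exact ⟨p, rfl⟩
    | inr t =>
      exfalso
      rcases hu with h | h <;>
        · have := congrArg Fin.val h
          simp [phi1] at this
          omega
  obtain ⟨q, rfl⟩ : ∃ q, v = Sum.inl q := by
    cases v with
    | inl q => exact ⟨q, rfl⟩
    | inr t =>
      exfalso
      rcases hv with h | h <;>
        · have := congrArg Fin.val h
          simp [phi1] at this
          omega
  set a : Fin 4 := ⟨i.val, hi⟩ with ha
  set b : Fin 4 := ⟨j.val, hj⟩ with hb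
  have hab : a ≠ b := by
    intro h
    exact hij (Fin.ext (by simpa [ha, hb, Fin.ext_iff] using h))
  have hcol : ∀ r : HhatVert, (phi1 k hk (Sum.inl r) = i ∨ phi1 k hk (Sum.inl r) = j) ↔
      colOK a b r := by
    intro r
    constructor
    · rintro (h | h)
      · exact Or.inl (Fin.ext (by simpa [phi1, Fin.ext_iff, ha] using congrArg Fin.val h))
      · exact Or.inr (Fin.ext (by simpa [phi1, Fin.ext_iff, hb] using congrArg Fin.val h))
    · rintro (h | h)
      · exact Or.inl (Fin.ext (by simpa [phi1, Fin.ext_iff, ha] using congrArg Fin.val h))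
      · exact Or.inr (Fin.ext (by simpa [phi1, Fin.ext_iff, hb] using congrArg Fin.val h))
  have step : ∀ r s : HhatVert, hAdj a b r s →
      (kempeSubgraph (Gk k) (phi1 k hk) i j).Adj (Sum.inl r) (Sum.inl s) := by
    intro r s hrs
    exact ⟨hrs.1, (hcol r).mpr hrs.2.1, (hcol s).mpr hrs.2.2⟩
  have hp : colOK a b p := (hcol p).mp hu
  have hq : colOK a b q := (hcol q).mp hv
  rcases chainKey a b hab p q hp hq with h | h | ⟨m, h1, h2⟩ | ⟨m, n, h1, h2, h3⟩ |
    ⟨m, n, o, h1, h2, h3, h4⟩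
  · rw [h]
  · exact (step _ _ h).reachable
  · exact ((step _ _ h1).reachable).trans (step _ _ h2).reachable
  · exact ((step _ _ h1).reachable).trans (((step _ _ h2).reachable).trans
      (step _ _ h3).reachable)
  · exact ((step _ _ h1).reachable).trans (((step _ _ h2).reachable).trans
      (((step _ _ h3).reachable).trans (step _ _ h4).reachable))

/-! ### The invariant -/

lemma invar (k : ℕ) (hk : 4 ≤ k) {φ ψ : (Gk k).Coloring (Fin k)}
    (h : KempeEquiv (Gk k) k φ ψ) :
    (∃ σ : Equiv.Perm (Fin k), ∀ v, φ v = σ (phi1 k hk v)) ↔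
      (∃ σ : Equiv.Perm (Fin k), ∀ v, ψ v = σ (phi1 k hk v)) := by
  have stepfwd : ∀ {α β : (Gk k).Coloring (Fin k)}, IsKempeSwap (Gk k) α β →
      (∃ σ : Equiv.Perm (Fin k), ∀ v, α v = σ (phi1 k hk v)) →
      (∃ σ : Equiv.Perm (Fin k), ∀ v, β v = σ (phi1 k hk v)) := by
    rintro α β hab ⟨σ, hs⟩
    have hfa : Frozen (Gk k) (fun x => α x) := by
      have : (fun x => α x) = fun v => σ (phi1 k hk v) := funext hs
      rw [this]
      exact frozen_perm (phi1_frozen k hk) σ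
    obtain ⟨τ, hτ⟩ := frozen_swap hfa hab
    exact ⟨σ.trans τ, fun v => by rw [hτ v, hs v]; rfl⟩
  induction h with
  | rel a b hab => exact ⟨stepfwd hab, stepfwd (kempeSwap_symm hab)⟩
  | refl => exact Iff.rfl
  | symm _ _ _ ih => exact ih.symm
  | trans _ _ _ _ _ ih1 ih2 => exact ih1.trans ih2

lemma not_equiv (k : ℕ) (hk : 4 ≤ k) : ¬ KempeEquiv (Gk k) k (col1 k hk) (col2 k hk) := by
  intro h
  obtain ⟨σ, hs⟩ := (invar k hk h).mp ⟨Equiv.refl _, fun v => rfl⟩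
  have e1 := hs (Sum.inl ⟨(0, 3), by decide⟩)
  have e2 := hs (Sum.inl ⟨(1, 3), by decide⟩)
  have e3 : phi1 k hk (Sum.inl ⟨(0, 3), by decide⟩) =
      phi1 k hk (Sum.inl ⟨(1, 3), by decide⟩) := rfl
  rw [e3] at e1
  have e4 := e1.trans e2.symm
  have e5 := congrArg Fin.val e4
  exact Nat.zero_ne_one e5

instance (k : ℕ) : Finite ((Gk k).Coloring (Fin k)) :=
  Finite.of_injective (fun f => (f : (HhatVert ⊕ Fin (k - 4)) → Fin k)) DFunLike.coe_injective

/-- For every `k ≥ 4`, the graph `G_k` is `(k-1)`-colorable and has at least two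
Kempe equivalence classes of `k`-colorings. -/
theorem stmt14 (k : ℕ) (hk : 4 ≤ k) :
    (Gk k).Colorable (k - 1) ∧ 2 ≤ Kc (Gk k) k := by
  constructor
  · refine ⟨Coloring.mk (fun v => match v with
      | Sum.inl p => ⟨p.1.1, by have := p.1.1.isLt; omega⟩
      | Sum.inr t => ⟨3 + t, by have := t.isLt; omega⟩) ?_⟩
    rintro (p | t) (q | s) h
    · simp only [Ne, Fin.mk.injEq]
      exact fun he => h.1 (Fin.ext he)
    · simp only [Ne, Fin.mk.injEq]
      have := p.1.1.isLt; omega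
    · simp only [Ne, Fin.mk.injEq]
      have := q.1.1.isLt; omega
    · simp only [Ne, Fin.mk.injEq]
      exact fun he => h (Fin.ext (by omega))
  · rw [Kc]
    refine Finite.one_lt_card_iff_nontrivial.mpr ⟨⟨Quot.mk _ (col1 k hk), Quot.mk _ (col2 k hk),
      fun h => not_equiv k hk ?_⟩⟩
    have := Quot.eq.mp h
    exact ((Relation.EqvGen.is_equivalence (IsKempeSwap (Gk k))).eqvGen_iff).mp this
end
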